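/- Let W be an n×n real symmetric matrix with eigenvalues in [0,1] and Φ_W as above. Then for every u ∈ ℝ^n, the point Wu is the unique minimizer over x ∈ ℝ^n of ½‖x−u‖² + Φ_W(x); i.e., the linear map x ↦ Wx is the proximal operator of Φ_W. -/

import Mathlib

open Matrix Classical

/-- The four Penrose conditions characterizing the Moore–Penrose pseudoinverse. -/
def IsMoorePenroseInverse {n : ℕ} (W P : Matrix (Fin n) (Fin n) ℝ) : Prop :=
  W * P * W = W ∧ P * W * P = P ∧ (W * P)ᵀ = W * P ∧ (P * W)ᵀ = P * W

/-- The PnP regularizer `Φ_W(x) = ½ xᵀ(I-W)W†x` on `range(W)`, `+∞` elsewhere. -/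
noncomputable def PnPRegularizer {n : ℕ} (W P : Matrix (Fin n) (Fin n) ℝ)
    (x : Fin n → ℝ) : EReal :=
  if x ∈ LinearMap.range W.mulVecLin then
    (((1 / 2 : ℝ) * (x ⬝ᵥ ((1 - W) * P).mulVec x) : ℝ) : EReal)
  else ⊤

/-- The proximal objective `x ↦ ½‖x - u‖² + Φ_W(x)` (Euclidean norm, as a dot
product), with values in the extended reals. -/
noncomputable def proxObjective {n : ℕ} (W P : Matrix (Fin n) (Fin n) ℝ)
    (u x : Fin n → ℝ) : EReal :=
  (((1 / 2 : ℝ) * ((x - u) ⬝ᵥ (x - u)) : ℝ) : EReal) + PnPRegularizer W P x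

private lemma mulVec_dot_mulVec {n : ℕ} (A B : Matrix (Fin n) (Fin n) ℝ)
    (v w : Fin n → ℝ) : (A *ᵥ v) ⬝ᵥ (B *ᵥ w) = v ⬝ᵥ ((Aᵀ * B) *ᵥ w) := by
  rw [Matrix.dotProduct_mulVec, Matrix.dotProduct_mulVec, ← Matrix.vecMul_vecMul,
    Matrix.vecMul_transpose]

/-- For a real symmetric `W` with eigenvalues in `[0,1]`, the point `Wu` is the
unique minimizer of `x ↦ ½‖x - u‖² + Φ_W(x)`; i.e., `x ↦ Wx` is the proximal
operator of `Φ_W`. -/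
theorem mulVec_is_prox {n : ℕ} (W P : Matrix (Fin n) (Fin n) ℝ)
    (hW : W.IsHermitian) (heig : ∀ i, hW.eigenvalues i ∈ Set.Icc (0 : ℝ) 1)
    (hP : IsMoorePenroseInverse W P) (u : Fin n → ℝ) :
    ∀ x : Fin n → ℝ, x ≠ W.mulVec u →
      proxObjective W P u (W.mulVec u) < proxObjective W P u x := by
  obtain ⟨h1, -, -, -⟩ := hP
  have hWt : Wᵀ = W := hW
  have hpsd : W.PosSemidef := hW.posSemidef_iff_eigenvalues_nonneg.mpr fun i => (heig i).1
  have hWu : W.mulVec u ∈ LinearMap.range W.mulVecLin := ⟨u, rfl⟩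
  -- the finite value of the objective at a point `W *ᵥ z` of the range:
  have key : ∀ z : Fin n → ℝ,
      (1 / 2 : ℝ) * ((W *ᵥ z - u) ⬝ᵥ (W *ᵥ z - u))
        + (1 / 2 : ℝ) * ((W *ᵥ z) ⬝ᵥ (((1 - W) * P) *ᵥ (W *ᵥ z)))
      = (1 / 2 : ℝ) * (z ⬝ᵥ (W *ᵥ z)) - u ⬝ᵥ (W *ᵥ z) + (1 / 2 : ℝ) * (u ⬝ᵥ u) := by
    intro z
    have e1 : (W *ᵥ z) ⬝ᵥ (W *ᵥ z) = z ⬝ᵥ ((W * W) *ᵥ z) := by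
      rw [mulVec_dot_mulVec, hWt]
    have e2 : (W *ᵥ z) ⬝ᵥ (((1 - W) * P) *ᵥ (W *ᵥ z))
        = z ⬝ᵥ (W *ᵥ z) - z ⬝ᵥ ((W * W) *ᵥ z) := by
      rw [Matrix.mulVec_mulVec, mulVec_dot_mulVec, hWt]
      have : W * ((1 - W) * P * W) = W - W * W := by
        have : W * ((1 - W) * P * W) = W * P * W - W * (W * P * W) := by
          noncomm_ring
        rw [this, h1]
      rw [this, Matrix.sub_mulVec, dotProduct_sub]
    have e3 : (W *ᵥ z) ⬝ᵥ u = u ⬝ᵥ (W *ᵥ z) := dotProduct_comm _ _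
    rw [dotProduct_sub, sub_dotProduct, sub_dotProduct, e1, e2, e3]
    ring
  intro x hx
  by_cases hr : x ∈ LinearMap.range W.mulVecLin
  · obtain ⟨y, rfl⟩ := hr
    have hyW : W.mulVecLin y = W *ᵥ y := rfl
    rw [hyW] at hx ⊢
    -- reduce to a real inequality
    unfold proxObjective PnPRegularizer
    rw [if_pos hWu, if_pos ⟨y, rfl⟩, ← EReal.coe_add, ← EReal.coe_add, EReal.coe_lt_coe_iff]
    rw [show W.mulVec u = W *ᵥ u from rfl, key u, key y]
    -- positivity of the quadratic form at v = y - u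
    set v := y - u with hv
    have hWv : W *ᵥ v ≠ 0 := by
      rw [hv, Matrix.mulVec_sub]
      intro h
      exact hx (by rwa [sub_eq_zero] at h)
    have hq : 0 < v ⬝ᵥ (W *ᵥ v) := by
      have h0 : 0 ≤ v ⬝ᵥ (W *ᵥ v) := by simpa using hpsd.dotProduct_mulVec_nonneg v
      rcases h0.lt_or_eq with h | h
      · exact h
      · exact absurd ((hpsd.dotProduct_mulVec_zero_iff v).mp (by simpa using h.symm)) hWv
    have hsym : y ⬝ᵥ (W *ᵥ u) = u ⬝ᵥ (W *ᵥ y) := by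
      conv_lhs => rw [← hWt]
      rw [Matrix.dotProduct_mulVec, Matrix.vecMul_transpose, dotProduct_comm]
    have hexp : v ⬝ᵥ (W *ᵥ v)
        = y ⬝ᵥ (W *ᵥ y) - 2 * (u ⬝ᵥ (W *ᵥ y)) + u ⬝ᵥ (W *ᵥ u) := by
      rw [hv, Matrix.mulVec_sub, dotProduct_sub, sub_dotProduct,
        sub_dotProduct, hsym]
      ring
    rw [hexp] at hq
    linarith
  · have h2 : proxObjective W P u x = ⊤ := by
      unfold proxObjective PnPRegularizer
      rw [if_neg hr]
      exact EReal.add_top_of_ne_bot (by exact_mod_cast EReal.coe_ne_bot _)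
    rw [h2]
    unfold proxObjective PnPRegularizer
    rw [if_pos hWu, ← EReal.coe_add]
    exact EReal.coe_lt_top _
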